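/- Let P and T be strings over an alphabet Σ and suppose P = F_1F_2⋯F_t, where each F_i is a nonempty substring (contiguous fragment) of T and, for each 1 ≤ i < t, the string obtained by extending F_i with the first character of F_{i+1} is not a substring of T. Then for every position a with 0 ≤ a ≤ |T|−|P|, δ_H(P, T[a..a+|P|)) ≥ ⌊t/2⌋. -/

import Mathlib

/-- Mismatch positions of two (equal-length) strings:
`Mis(X,Y) = {i : X[i] ≠ Y[i]}`. -/
def mis {α : Type*} [DecidableEq α] [Inhabited α] (X Y : List α) : Finset ℕ :=
  (Finset.range (min X.length Y.length)).filter (fun i => X.getD i default ≠ Y.getD i default)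

/-- Hamming distance of two (equal-length) strings: the number of mismatch positions. -/
def hdist {α : Type*} [DecidableEq α] [Inhabited α] (X Y : List α) : ℕ := (mis X Y).card

/-- The fragment `S[x..x+L)`. -/
def frag {α : Type*} (S : List α) (x L : ℕ) : List α := (S.drop x).take L

/-- `Q^∞[a..a+L)`: the string of length `L` whose `i`-th character is `Q[(a+i) mod |Q|]`. -/
def qinf {α : Type*} [Inhabited α] (Q : List α) (a L : ℕ) : List α :=
  (List.range L).map (fun i => Q.getD ((a + i) % Q.length) default)

/-- A nonempty string is primitive if it is not of the form `Y^h` with `h ≥ 2`. -/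
def Primitive {α : Type*} (Q : List α) : Prop :=
  Q ≠ [] ∧ ∀ (Y : List α) (h : ℕ), 2 ≤ h → Q ≠ (List.replicate h Y).flatten

lemma frag_infix {α : Type*} (S : List α) (x L : ℕ) : frag S x L <:+: S :=
  ((List.take_prefix _ _).isInfix).trans (List.drop_suffix x S).isInfix

lemma frag_length {α : Type*} (S : List α) (x L : ℕ) (h : x + L ≤ S.length) :
    (frag S x L).length = L := by
  simp [frag]; omega

lemma frag_getD {α : Type*} [Inhabited α] (S : List α) (x L k : ℕ) (hk : k < L)
    (h : x + L ≤ S.length) : (frag S x L).getD k default = S.getD (x + k) default := by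
  have h1 : k < (frag S x L).length := by rw [frag_length S x L h]; exact hk
  have h2 : x + k < S.length := by omega
  rw [List.getD_eq_getElem _ _ h1, List.getD_eq_getElem _ _ h2]
  simp only [frag, List.getElem_take, List.getElem_drop]

/-- prefix length -/
def plen {α : Type*} (Fs : List (List α)) (i : ℕ) : ℕ := ((Fs.take i).flatten).length

lemma flatten_take_succ {α : Type*} (Fs : List (List α)) (i : ℕ) (hi : i < Fs.length) :
    (Fs.take (i+1)).flatten = (Fs.take i).flatten ++ Fs.getD i [] := by
  rw [List.take_succ, List.flatten_append, List.getD_eq_getElem?_getD,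
    List.getElem?_eq_getElem hi]
  simp

lemma plen_succ {α : Type*} (Fs : List (List α)) (i : ℕ) (hi : i < Fs.length) :
    plen Fs (i+1) = plen Fs i + (Fs.getD i []).length := by
  unfold plen; rw [flatten_take_succ Fs i hi]; simp

lemma plen_mono {α : Type*} (Fs : List (List α)) : Monotone (plen Fs) := by
  apply monotone_nat_of_le_succ
  intro i
  rcases lt_or_ge i Fs.length with h | h
  · rw [plen_succ Fs i h]; omega
  · unfold plen
    rw [List.take_of_length_le (by omega), List.take_of_length_le (by omega)]

lemma plen_le {α : Type*} (Fs : List (List α)) (i : ℕ) :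
    plen Fs i ≤ Fs.flatten.length := by
  have := plen_mono Fs (le_refl Fs.length |>.trans (le_max_left _ i) |> fun _ => le_max_right Fs.length i)
  have h : plen Fs i ≤ plen Fs (max Fs.length i) := plen_mono Fs (le_max_right _ _)
  unfold plen at h
  rwa [List.take_of_length_le (le_max_left _ _)] at h

lemma flatten_getD {α : Type*} [Inhabited α] (Fs : List (List α)) (i k : ℕ)
    (hi : i < Fs.length) (hk : k < (Fs.getD i []).length) :
    Fs.flatten.getD (plen Fs i + k) default = (Fs.getD i []).getD k default := by
  have hsplit : Fs.flatten = (Fs.take i).flatten ++ (Fs.getD i [] ++ (Fs.drop (i+1)).flatten) := by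
    conv_lhs => rw [← List.take_append_drop (i+1) Fs]
    rw [List.flatten_append, flatten_take_succ Fs i hi, List.append_assoc]
  rw [hsplit, List.getD_append_right _ _ _ _ (by unfold plen; omega)]
  have : plen Fs i + k - ((Fs.take i).flatten).length = k := by unfold plen; omega
  rw [this, List.getD_append _ _ _ _ hk]

lemma headI_eq_getD {α : Type*} [Inhabited α] (l : List α) (h : l ≠ []) :
    l.headI = l.getD 0 default := by
  cases l with
  | nil => exact absurd rfl h
  | cons a l => rfl

theorem stmt10 {α : Type*} [DecidableEq α] [Inhabited α]
    (P T : List α) (t : ℕ) (Fs : List (List α)) (hlen : Fs.length = t)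
    (hP : P = Fs.flatten)
    (hsub : ∀ F ∈ Fs, F ≠ [] ∧ F <:+: T)
    (hext : ∀ i : ℕ, i + 1 < t → ¬ (Fs.getD i [] ++ [(Fs.getD (i + 1) []).headI]) <:+: T) :
    ∀ a : ℕ, a + P.length ≤ T.length → t / 2 ≤ hdist P (frag T a P.length) := by
  intro a ha
  set s : ℕ → ℕ := plen Fs with hs
  have hne : ∀ i < t, Fs.getD i [] ≠ [] := by
    intro i hi
    have : Fs.getD i [] ∈ Fs := by
      simp only [List.getD_eq_getElem?_getD, List.getElem?_eq_getElem (show i < Fs.length by omega),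
        Option.getD_some]
      exact List.getElem_mem _
    exact (hsub _ this).1
  have hsP : ∀ i ≤ t, s i ≤ P.length := by
    intro i hi; rw [hP]; exact plen_le Fs i
  have hssucc : ∀ i < t, s (i+1) = s i + (Fs.getD i []).length := by
    intro i hi; exact plen_succ Fs i (by omega)
  have hslt : ∀ i < t, s i < s (i+1) := by
    intro i hi
    rw [hssucc i hi]
    have := hne i hi
    have : (Fs.getD i []).length ≠ 0 := fun h => this (List.length_eq_zero_iff.mp h)
    omega
  -- the key mismatch existence claim
  have key : ∀ i, i + 1 < t → ∃ j, s i ≤ j ∧ j ≤ s (i+1) ∧ j ∈ mis P (frag T a P.length) := by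
    intro i hi
    set Fi := Fs.getD i [] with hFi
    set Fj := Fs.getD (i+1) [] with hFj
    have hFiL : Fi.length = (Fs.getD i []).length := by rw [hFi]
    have hsi1 : s (i+1) < P.length := by
      have h1 := hslt (i+1) hi
      have h2 := hsP (i+1+1) (by omega)
      omega
    by_contra hcon
    push_neg at hcon
    -- every position in [s i, s (i+1)] matches
    have hmatch : ∀ j, s i ≤ j → j ≤ s (i+1) → P.getD j default = T.getD (a+j) default := by
      intro j h1 h2
      by_contra hne'
      have hjP : j < P.length := by omega
      have : j ∈ mis P (frag T a P.length) := by
        unfold mis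
        rw [Finset.mem_filter, Finset.mem_range]
        constructor
        · rw [frag_length T a P.length ha]; omega
        · rw [frag_getD T a P.length j hjP ha]; exact hne'
      exact hcon j h1 h2 this
    apply hext i hi
    have hW : Fi ++ [Fj.headI] = frag T (a + s i) (Fi.length + 1) := by
      have hlenW : (Fi ++ [Fj.headI]).length = Fi.length + 1 := by simp
      have hTlen : (a + s i) + (Fi.length + 1) ≤ T.length := by
        have := hssucc i (by omega); omega
      apply List.ext_getElem
      · rw [hlenW, frag_length _ _ _ hTlen]
      · intro k h1 h2
        rw [← List.getD_eq_getElem _ default h1, ← List.getD_eq_getElem _ default h2]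
        rw [frag_getD T (a + s i) (Fi.length + 1) k (by rw [hlenW] at h1; omega) hTlen]
        rcases lt_or_ge k Fi.length with hk | hk
        · rw [List.getD_append _ _ _ _ hk]
          have e1 : Fi.getD k default = P.getD (s i + k) default := by
            rw [hP]; exact (flatten_getD Fs i k (by omega) hk).symm
          rw [e1, hmatch (s i + k) (by omega) (by rw [hssucc i (by omega)]; omega)]
          ring_nf
        · have hk' : k = Fi.length := by rw [hlenW] at h1; omega
          subst hk'
          rw [List.getD_append_right _ _ _ _ (le_refl _)]
          simp only [Nat.sub_self]
          have e0 : ([Fj.headI] : List α).getD 0 default = Fj.headI := rfl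
          rw [e0, headI_eq_getD Fj (hne (i+1) hi)]
          have e1 : Fj.getD 0 default = P.getD (s (i+1)) default := by
            rw [hP]
            have := flatten_getD Fs (i+1) 0 (by omega)
              (by have := hne (i+1) hi; have : (Fs.getD (i+1) []).length ≠ 0 := fun h => this (List.length_eq_zero_iff.mp h); omega)
            rw [← this]; ring_nf; rfl
          rw [e1, hmatch (s (i+1)) (by have := hslt i (by omega); omega) (le_refl _)]
          rw [hssucc i (by omega)]
          ring_nf
          rfl
    rw [hW]
    exact frag_infix T (a + s i) (Fi.length + 1)
  -- choose mismatches
  have key' : ∀ i, ∃ j, i + 1 < t → s i ≤ j ∧ j ≤ s (i+1) ∧ j ∈ mis P (frag T a P.length) := by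
    intro i
    by_cases hi : i + 1 < t
    · obtain ⟨j, h1, h2, h3⟩ := key i hi; exact ⟨j, fun _ => ⟨h1, h2, h3⟩⟩
    · exact ⟨0, fun h => absurd h hi⟩
  choose f hf using key'
  have hcard : (Finset.range (t/2)).card ≤ (mis P (frag T a P.length)).card := by
    apply Finset.card_le_card_of_injOn (fun k => f (2*k))
    · intro k hk
      simp only [Finset.coe_range, Set.mem_Iio, Finset.mem_coe, Finset.mem_range] at hk
      exact (hf (2*k) (by omega)).2.2
    · have hmono : ∀ x y : ℕ, x < t/2 → y < t/2 → x < y → f (2*x) < f (2*y) := by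
        intro x y hx hy hlt
        have h1 : f (2*x) ≤ s (2*x+1) := (hf (2*x) (by omega)).2.1
        have h2 : s (2*x+2) ≤ s (2*y) := plen_mono Fs (by omega)
        have h3 : s (2*y) ≤ f (2*y) := (hf (2*y) (by omega)).1
        have h4 : s (2*x+1) < s (2*x+2) := hslt (2*x+1) (by omega)
        omega
      intro x hx y hy hxy
      simp only [Finset.mem_coe, Finset.mem_range] at hx hy
      simp only at hxy
      rcases lt_trichotomy x y with h | h | h
      · exact absurd hxy (Nat.ne_of_lt (hmono x y hx hy h))
      · exact h
      · exact absurd hxy.symm (Nat.ne_of_lt (hmono y x hy hx h))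
  simpa [hdist] using hcard
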